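/- Existence criterion for the real group inverse: let A ∈ ℝ^{n×n×p} with Fourier blocks A_1,…,A_p. Then A has a real-valued group inverse A^# under the t-product if and only if every matrix A_i is group invertible; in that case bcirc(A^#) = (F_p* ⊗ I_n)·diag(A_1^#,…,A_p^#)·(F_p ⊗ I_n). -/
import Mathlib


open Matrix Complex BigOperators Kronecker

/-- A third-order tensor, represented by its frontal slices (indexed cyclically). -/
abbrev Tensor (F : Type*) (m n p : ℕ) : Type _ :=
  ZMod p → Matrix (Fin m) (Fin n) F

/-- The block-circulant matrix of a tensor: block (i,j) is slice (i - j mod p). -/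
def bcirc {F : Type*} {m n p : ℕ} (A : Tensor F m n p) :
    Matrix (ZMod p × Fin m) (ZMod p × Fin n) F :=
  Matrix.of fun ir jc => A (ir.1 - jc.1) ir.2 jc.2

/-- The t-product of tensors: (A*B)^{(i)} = ∑_j A^{(i-j)} B^{(j)}. -/
def tpr {F : Type*} [CommRing F] {m n l p : ℕ} [NeZero p]
    (A : Tensor F m n p) (B : Tensor F n l p) : Tensor F m l p :=
  fun i => ∑ j : ZMod p, A (i - j) * B j

/-- The identity tensor: first frontal slice is I_n, others are zero. -/
def tId (F : Type*) [CommRing F] (n p : ℕ) [NeZero p] : Tensor F n n p :=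
  fun i => if i = 0 then 1 else 0

/-- Tensor transpose: transpose each slice and reverse the order of slices 2..p. -/
def tT {F : Type*} {m n p : ℕ} (A : Tensor F m n p) : Tensor F n m p :=
  fun i => (A (-i))ᵀ

/-- ξ = e^{-2πi/p}. -/
noncomputable def xi (p : ℕ) : ℂ :=
  Complex.exp (-(2 * Real.pi * Complex.I) / p)

/-- The normalized DFT matrix of order p. -/
noncomputable def Fmat (p : ℕ) : Matrix (ZMod p) (ZMod p) ℂ :=
  Matrix.of fun j k => (1 / (Real.sqrt p : ℂ)) * xi p ^ (j.val * k.val)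

/-- The Fourier blocks of a complex tensor: A_i = ∑_k ξ^{(i)(k)} A^{(k)} (0-based). -/
noncomputable def fblock {m n p : ℕ} [NeZero p] (A : Tensor ℂ m n p) (i : ZMod p) :
    Matrix (Fin m) (Fin n) ℂ :=
  ∑ k : ZMod p, xi p ^ (i.val * k.val) • A k

/-- Complexification of a real tensor. -/
def cplx {m n p : ℕ} (A : Tensor ℝ m n p) : Tensor ℂ m n p :=
  fun i => (A i).map (Complex.ofReal)

/-- Block diagonal matrix with p equal-size blocks. -/
def blockDiag {m n p : ℕ} (M : ZMod p → Matrix (Fin m) (Fin n) ℂ) :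
    Matrix (ZMod p × Fin m) (ZMod p × Fin n) ℂ :=
  Matrix.of fun ir jc => if ir.1 = jc.1 then M ir.1 ir.2 jc.2 else 0

/-- Entrywise conjugation of a complex matrix. -/
def conjM {m n : ℕ} (M : Matrix (Fin m) (Fin n) ℂ) : Matrix (Fin m) (Fin n) ℂ :=
  M.map (starRingEnd ℂ)

/-- A complex matrix is real if all entries have zero imaginary part. -/
def IsRealM {m n : ℕ} (M : Matrix (Fin m) (Fin n) ℂ) : Prop :=
  ∀ r c, (M r c).im = 0

/-- The group-inverse equations for complex matrices. -/
def IsGroupInvM {n : ℕ} (M X : Matrix (Fin n) (Fin n) ℂ) : Prop :=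
  M * X * M = M ∧ X * M * X = X ∧ M * X = X * M


namespace Stmt16Aux

noncomputable def ee (p : ℕ) (a b : ZMod p) : ℂ := xi p ^ (a.val * b.val)

variable {p : ℕ} [NeZero p]

lemma xi_prim (p : ℕ) [NeZero p] : IsPrimitiveRoot (xi p) p := by
  have h := Complex.isPrimitiveRoot_exp p (NeZero.ne p)
  have hx : xi p = (Complex.exp (2 * Real.pi * Complex.I / p))⁻¹ := by
    rw [xi, ← Complex.exp_neg]
    ring_nf
  rw [hx]
  exact h.inv

lemma xi_pow_p : xi p ^ p = 1 := (xi_prim p).pow_eq_one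

lemma xi_pow_mod (s : ℕ) : xi p ^ s = xi p ^ (s % p) := by
  conv_lhs => rw [← Nat.mod_add_div s p]
  rw [pow_add, pow_mul, xi_pow_p, one_pow, mul_one]

lemma xi_pow_congr {s t : ℕ} (h : s ≡ t [MOD p]) : xi p ^ s = xi p ^ t := by
  rw [xi_pow_mod s, xi_pow_mod t]
  exact congrArg (xi p ^ ·) h

lemma ee_comm (a b : ZMod p) : ee p a b = ee p b a := by
  rw [ee, ee, Nat.mul_comm]

lemma ee_add_right (a b c : ZMod p) : ee p a (b + c) = ee p a b * ee p a c := by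
  rw [ee, ee, ee, ← pow_add]
  apply xi_pow_congr
  have h : (b + c).val ≡ b.val + c.val [MOD p] := by
    rw [ZMod.val_add]; exact Nat.mod_modEq _ p
  calc a.val * (b + c).val ≡ a.val * (b.val + c.val) [MOD p] := h.mul_left _
    _ = a.val * b.val + a.val * c.val := by ring

lemma ee_zero_right (a : ZMod p) : ee p a 0 = 1 := by
  rw [ee, ZMod.val_zero, Nat.mul_zero, pow_zero]

lemma ee_mul_neg (a b : ZMod p) : ee p a b * ee p a (-b) = 1 := by
  rw [← ee_add_right, add_neg_cancel, ee_zero_right]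

lemma conj_xi : (starRingEnd ℂ) (xi p) = (xi p)⁻¹ := by
  rw [xi, ← Complex.exp_conj, ← Complex.exp_neg]
  congr 1
  simp only [div_eq_mul_inv, map_neg, _root_.map_mul, map_inv₀, Complex.conj_I,
    Complex.conj_ofReal, Complex.conj_natCast, map_ofNat]
  ring

lemma conj_ee (a b : ZMod p) : (starRingEnd ℂ) (ee p a b) = ee p a (-b) := by
  have h1 : (starRingEnd ℂ) (ee p a b) * ee p a b = 1 := by
    rw [ee, map_pow, conj_xi, inv_pow, inv_mul_cancel₀]
    exact pow_ne_zero _ ((xi_prim p).ne_zero (NeZero.ne p))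
  have h2 := ee_mul_neg a b
  calc (starRingEnd ℂ) (ee p a b) = (starRingEnd ℂ) (ee p a b) * (ee p a b * ee p a (-b)) := by
        rw [h2, mul_one]
    _ = ((starRingEnd ℂ) (ee p a b) * ee p a b) * ee p a (-b) := by ring
    _ = ee p a (-b) := by rw [h1, one_mul]

lemma orth_right (a : ZMod p) : ∑ b : ZMod p, ee p a b = if a = 0 then (p : ℂ) else 0 := by
  by_cases h : a = 0
  · subst h
    simp [ee, ZMod.val_zero, Finset.card_univ, ZMod.card]
  · rw [if_neg h]
    obtain ⟨q, rfl⟩ := Nat.exists_eq_succ_of_ne_zero (NeZero.ne p)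
    have hw : ∀ b : ZMod (q+1), ee (q+1) a b = (xi (q+1) ^ a.val) ^ b.val := by
      intro b; rw [ee, pow_mul]
    have hne : xi (q+1) ^ a.val ≠ 1 := by
      intro hc
      have hdvd := ((xi_prim (q+1)).pow_eq_one_iff_dvd a.val).mp hc
      have hlt := ZMod.val_lt a
      have h0 : a.val = 0 := Nat.eq_zero_of_dvd_of_lt hdvd hlt
      exact h ((ZMod.val_eq_zero a).mp h0)
    have hp1 : (xi (q+1) ^ a.val) ^ (q+1) = 1 := by
      rw [← pow_mul, Nat.mul_comm, pow_mul, xi_pow_p, one_pow]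
    calc ∑ b : ZMod (q+1), ee (q+1) a b
        = ∑ b : Fin (q+1), (xi (q+1) ^ a.val) ^ (b : Fin (q+1)).val := by
          exact Finset.sum_congr rfl (fun b _ => hw b)
      _ = ∑ t ∈ Finset.range (q+1), (xi (q+1) ^ a.val) ^ t :=
          Fin.sum_univ_eq_sum_range _ _
      _ = ((xi (q+1) ^ a.val) ^ (q+1) - 1) / (xi (q+1) ^ a.val - 1) := geom_sum_eq hne _
      _ = 0 := by rw [hp1, sub_self, zero_div]

lemma orth_left (b : ZMod p) : ∑ a : ZMod p, ee p a b = if b = 0 then (p : ℂ) else 0 := by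
  rw [← orth_right b]
  exact Finset.sum_congr rfl (fun a _ => ee_comm a b)

lemma ee_neg_comm (a b : ZMod p) : ee p a (-b) = ee p b (-a) := by
  rw [← conj_ee, ee_comm, conj_ee]

section Mats

variable {m n l : ℕ}

lemma ginv_unique {n : ℕ} {M X Y : Matrix (Fin n) (Fin n) ℂ}
    (hX : IsGroupInvM M X) (hY : IsGroupInvM M Y) : X = Y := by
  obtain ⟨hX1, hX2, hX3⟩ := hX
  obtain ⟨hY1, hY2, hY3⟩ := hY
  have ha : X * X * M = X := by rw [mul_assoc, ← hX3, ← mul_assoc, hX2]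
  have ha' : M * Y * Y = Y := by rw [hY3, hY2]
  have hb : X = X * Y * M := by
    calc X = X * X * M := ha.symm
      _ = X * X * (M * Y * M) := by rw [hY1]
      _ = X * X * M * (Y * M) := by simp only [mul_assoc]
      _ = X * (Y * M) := by rw [ha]
      _ = X * Y * M := by rw [mul_assoc]
  have hc : Y = X * M * Y := by
    calc Y = M * Y * Y := ha'.symm
      _ = M * X * M * Y * Y := by rw [hX1]
      _ = M * X * (M * Y * Y) := by simp only [mul_assoc]
      _ = M * X * Y := by rw [ha']
      _ = X * M * Y := by rw [hX3]
  calc X = X * Y * M := hb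
    _ = X * (M * Y) := by rw [mul_assoc, ← hY3]
    _ = X * M * Y := by rw [← mul_assoc]
    _ = Y := hc.symm

lemma fblock_eq (A : Tensor ℂ m n p) (i : ZMod p) :
    fblock A i = ∑ k : ZMod p, ee p i k • A k := rfl

lemma fblock_tpr (A : Tensor ℂ m n p) (B : Tensor ℂ n l p) (i : ZMod p) :
    fblock (tpr A B) i = fblock A i * fblock B i := by
  rw [fblock_eq, fblock_eq, fblock_eq, Matrix.sum_mul]
  simp only [Matrix.mul_sum]
  simp only [Matrix.smul_mul, Matrix.mul_smul, smul_smul]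
  simp only [tpr, Finset.smul_sum]
  calc (∑ k : ZMod p, ∑ j : ZMod p, ee p i k • (A (k - j) * B j))
      = ∑ j : ZMod p, ∑ k : ZMod p, ee p i k • (A (k - j) * B j) := Finset.sum_comm
    _ = ∑ j : ZMod p, ∑ a : ZMod p, (ee p i a * ee p i j) • (A a * B j) := by
        refine Finset.sum_congr rfl fun j _ => ?_
        refine Fintype.sum_equiv (Equiv.subRight j) _ _ fun x => ?_
        simp only [Equiv.subRight_apply]
        rw [show ee p i x = ee p i (x - j) * ee p i j from by rw [← ee_add_right, sub_add_cancel]]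
    _ = ∑ a : ZMod p, ∑ j : ZMod p, (ee p i a * ee p i j) • (A a * B j) := Finset.sum_comm
    _ = ∑ a : ZMod p, ∑ j : ZMod p, (ee p i j * ee p i a) • (A a * B j) :=
        Finset.sum_congr rfl fun a _ => Finset.sum_congr rfl fun j _ => by
          rw [mul_comm (ee p i a)]

lemma fblock_inv (B : Tensor ℂ m n p) (k : ZMod p) :
    (p : ℂ)⁻¹ • ∑ i : ZMod p, ee p i (-k) • fblock B i = B k := by
  have hcalc : ∑ i : ZMod p, ee p i (-k) • fblock B i = (p : ℂ) • B k := by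
    calc ∑ i : ZMod p, ee p i (-k) • fblock B i
        = ∑ i : ZMod p, ∑ l : ZMod p, (ee p i (-k) * ee p i l) • B l := by
          simp only [fblock_eq, Finset.smul_sum, smul_smul]
      _ = ∑ l : ZMod p, ∑ i : ZMod p, ee p i (l - k) • B l := by
          rw [Finset.sum_comm]
          exact Finset.sum_congr rfl fun l _ => Finset.sum_congr rfl fun i _ => by
            rw [← ee_add_right, neg_add_eq_sub]
      _ = ∑ l : ZMod p, (∑ i : ZMod p, ee p i (l - k)) • B l := by
          simp only [Finset.sum_smul]
      _ = ∑ l : ZMod p, (if l - k = 0 then (p : ℂ) else 0) • B l := by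
          refine Finset.sum_congr rfl fun l _ => ?_
          rw [orth_left]
      _ = (p : ℂ) • B k := by
          rw [Finset.sum_eq_single k
            (fun l _ hl => by rw [if_neg (fun h0 => hl (sub_eq_zero.mp h0)), zero_smul])
            (fun h => absurd (Finset.mem_univ k) h)]
          rw [sub_self, if_pos rfl]
  rw [hcalc, smul_smul, inv_mul_cancel₀ (Nat.cast_ne_zero.mpr (NeZero.ne p)), one_smul]

lemma fblock_injective {X Y : Tensor ℂ m n p} (h : ∀ i, fblock X i = fblock Y i) : X = Y := by
  funext k
  rw [← fblock_inv X k, ← fblock_inv Y k]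
  simp only [h]

lemma fblock_invT (M : ZMod p → Matrix (Fin m) (Fin n) ℂ) (j : ZMod p) :
    fblock (fun k => (p : ℂ)⁻¹ • ∑ i : ZMod p, ee p i (-k) • M i) j = M j := by
  rw [fblock_eq]
  have hcalc : ∑ k : ZMod p, ee p j k • ((p : ℂ)⁻¹ • ∑ i : ZMod p, ee p i (-k) • M i)
      = (p : ℂ) • ((p : ℂ)⁻¹ • M j) := by
    calc ∑ k : ZMod p, ee p j k • ((p : ℂ)⁻¹ • ∑ i : ZMod p, ee p i (-k) • M i)
        = ∑ k : ZMod p, ∑ i : ZMod p, (ee p j k * ee p i (-k)) • ((p : ℂ)⁻¹ • M i) := by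
          simp only [Finset.smul_sum, smul_smul]
          refine Finset.sum_congr rfl fun k _ => Finset.sum_congr rfl fun i _ => ?_
          congr 1
          ring
      _ = ∑ i : ZMod p, ∑ k : ZMod p, ee p k (j - i) • ((p : ℂ)⁻¹ • M i) := by
          rw [Finset.sum_comm]
          refine Finset.sum_congr rfl fun i _ => Finset.sum_congr rfl fun k _ => ?_
          rw [show ee p j k * ee p i (-k) = ee p k (j - i) from by
            rw [ee_neg_comm i k, ee_comm j k, ← ee_add_right, ← sub_eq_add_neg]]
      _ = ∑ i : ZMod p, (∑ k : ZMod p, ee p k (j - i)) • ((p : ℂ)⁻¹ • M i) := by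
          simp only [Finset.sum_smul]
      _ = ∑ i : ZMod p, (if j - i = 0 then (p : ℂ) else 0) • ((p : ℂ)⁻¹ • M i) := by
          refine Finset.sum_congr rfl fun i _ => ?_
          rw [orth_left]
      _ = (p : ℂ) • ((p : ℂ)⁻¹ • M j) := by
          rw [Finset.sum_eq_single j
            (fun l _ hl => by
              rw [if_neg (fun h0 => hl (sub_eq_zero.mp h0).symm), zero_smul])
            (fun h => absurd (Finset.mem_univ j) h)]
          rw [sub_self, if_pos rfl]
  rw [hcalc, smul_smul, mul_inv_cancel₀ (Nat.cast_ne_zero.mpr (NeZero.ne p)), one_smul]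

end Mats

section Mats2

variable {m n l : ℕ}

lemma conjM_conjM {m n : ℕ} (M : Matrix (Fin m) (Fin n) ℂ) : conjM (conjM M) = M := by
  ext r c
  simp [conjM, Matrix.map_apply]

lemma conjM_mul {n : ℕ} (M N : Matrix (Fin n) (Fin n) ℂ) :
    conjM (M * N) = conjM M * conjM N := by
  simp only [conjM, Matrix.map_mul]

lemma conjM_ginv {n : ℕ} {M X : Matrix (Fin n) (Fin n) ℂ} (h : IsGroupInvM M X) :
    IsGroupInvM (conjM M) (conjM X) := by
  obtain ⟨h1, h2, h3⟩ := h
  exact ⟨by rw [← conjM_mul, ← conjM_mul, h1], by rw [← conjM_mul, ← conjM_mul, h2],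
    by rw [← conjM_mul, ← conjM_mul, h3]⟩

lemma conjM_fblock (A : Tensor ℝ m n p) (i : ZMod p) :
    conjM (fblock (cplx A) i) = fblock (cplx A) (-i) := by
  ext r c
  simp only [conjM, Matrix.map_apply, fblock_eq, Matrix.sum_apply, Matrix.smul_apply,
    smul_eq_mul, map_sum, _root_.map_mul]
  refine Finset.sum_congr rfl fun k _ => ?_
  have h1 : (starRingEnd ℂ) (ee p i k) = ee p (-i) k := by
    rw [ee_comm i k, conj_ee, ee_comm]
  rw [h1]
  congr 1
  simp [cplx, Matrix.map_apply, Complex.conj_ofReal]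

lemma cplx_tpr (A : Tensor ℝ m n p) (B : Tensor ℝ n l p) :
    cplx (tpr A B) = tpr (cplx A) (cplx B) := by
  funext i
  ext r c
  simp only [cplx, tpr, Matrix.map_apply, Matrix.sum_apply, Matrix.mul_apply]
  push_cast
  rfl

lemma cplx_inj {X Y : Tensor ℝ m n p} (h : cplx X = cplx Y) : X = Y := by
  funext k
  ext r c
  have h2 : (cplx X k) r c = (cplx Y k) r c := by rw [h]
  simpa [cplx, Matrix.map_apply] using h2

lemma fblock_ginv {A G : Tensor ℝ n n p} (h1 : tpr A (tpr G A) = A)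
    (h2 : tpr G (tpr A G) = G) (h3 : tpr A G = tpr G A) (i : ZMod p) :
    IsGroupInvM (fblock (cplx A) i) (fblock (cplx G) i) := by
  have c1 : tpr (cplx A) (tpr (cplx G) (cplx A)) = cplx A := by
    rw [← cplx_tpr, ← cplx_tpr, h1]
  have c2 : tpr (cplx G) (tpr (cplx A) (cplx G)) = cplx G := by
    rw [← cplx_tpr, ← cplx_tpr, h2]
  have c3 : tpr (cplx A) (cplx G) = tpr (cplx G) (cplx A) := by
    rw [← cplx_tpr, ← cplx_tpr, h3]
  refine ⟨?_, ?_, ?_⟩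
  · have := congrArg (fun T => fblock T i) c1
    simpa [fblock_tpr, mul_assoc] using this
  · have := congrArg (fun T => fblock T i) c2
    simpa [fblock_tpr, mul_assoc] using this
  · have := congrArg (fun T => fblock T i) c3
    simpa [fblock_tpr] using this

end Mats2

lemma bcirc_diag {n : ℕ} (B : Tensor ℂ n n p) :
    bcirc B = ((Fmat p)ᴴ ⊗ₖ (1 : Matrix (Fin n) (Fin n) ℂ)) *
      blockDiag (fun i => fblock B i) * ((Fmat p) ⊗ₖ (1 : Matrix (Fin n) (Fin n) ℂ)) := by
  ext ⟨i, r⟩ ⟨j, c⟩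
  simp only [Matrix.mul_apply, Matrix.kroneckerMap_apply, Matrix.conjTranspose_apply,
    _root_.blockDiag, Matrix.of_apply, Matrix.one_apply, Fintype.sum_prod_type, bcirc,
    mul_ite, ite_mul, mul_zero, zero_mul, mul_one, one_mul,
    Finset.sum_ite_irrel, Finset.sum_const_zero,
    Finset.sum_ite_eq, Finset.sum_ite_eq', Finset.mem_univ, if_true]
  have hp : (1 / (Real.sqrt p : ℂ)) * (1 / (Real.sqrt p : ℂ)) = (p : ℂ)⁻¹ := by
    rw [div_mul_div_comm, one_mul, ← Complex.ofReal_mul,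
      Real.mul_self_sqrt (Nat.cast_nonneg p), one_div, Complex.ofReal_natCast]
  have hstar : ∀ a : ZMod p, star (Fmat p a i) = (1 / (Real.sqrt p : ℂ)) * ee p a (-i) := by
    intro a
    rw [← starRingEnd_apply, Fmat, Matrix.of_apply, _root_.map_mul, map_div₀, _root_.map_one,
      Complex.conj_ofReal]
    congr 1
    exact conj_ee a i
  symm
  calc ∑ a : ZMod p, star (Fmat p a i) * fblock B a r c * Fmat p a j
      = ∑ a : ZMod p, ∑ k : ZMod p, (p : ℂ)⁻¹ * ee p a (k + j - i) * B k r c := by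
        refine Finset.sum_congr rfl fun a _ => ?_
        rw [hstar a, fblock_eq, Matrix.sum_apply]
        simp only [Matrix.smul_apply, smul_eq_mul]
        have hFj : Fmat p a j = (1 / (Real.sqrt p : ℂ)) * ee p a j := rfl
        rw [hFj, Finset.mul_sum, Finset.sum_mul]
        refine Finset.sum_congr rfl fun k _ => ?_
        have he : ee p a (k + j - i) = ee p a k * ee p a j * ee p a (-i) := by
          rw [sub_eq_add_neg, ee_add_right, ee_add_right]
        rw [he, ← hp]
        ring
    _ = ∑ k : ZMod p, (p : ℂ)⁻¹ * (∑ a : ZMod p, ee p a (k + j - i)) * B k r c := by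
        rw [Finset.sum_comm]
        refine Finset.sum_congr rfl fun k _ => ?_
        rw [Finset.mul_sum, Finset.sum_mul]
    _ = ∑ k : ZMod p, (if k + j - i = 0 then (p : ℂ)⁻¹ * (p : ℂ) else 0) * B k r c := by
        refine Finset.sum_congr rfl fun k _ => ?_
        rw [orth_left]
        split_ifs
        · ring
        · ring
    _ = B (i - j) r c := by
        rw [Finset.sum_eq_single (i - j)
          (fun k _ hk => by
            rw [if_neg fun h0 => hk (by
              have : k + j = i := sub_eq_zero.mp h0
              rw [← this]; ring), zero_mul])
          (fun h => absurd (Finset.mem_univ _) h)]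
        rw [if_pos (by ring), inv_mul_cancel₀ (Nat.cast_ne_zero.mpr (NeZero.ne p)), one_mul]

end Stmt16Aux

open Stmt16Aux in
theorem stmt16 {n p : ℕ} [NeZero p] (A : Tensor ℝ n n p) :
    ((∃ G : Tensor ℝ n n p, tpr A (tpr G A) = A ∧ tpr G (tpr A G) = G ∧
        tpr A G = tpr G A) ↔
      (∀ i : ZMod p, ∃ Gi : Matrix (Fin n) (Fin n) ℂ, IsGroupInvM (fblock (cplx A) i) Gi)) ∧
    (∀ G : Tensor ℝ n n p,
      (tpr A (tpr G A) = A ∧ tpr G (tpr A G) = G ∧ tpr A G = tpr G A) →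
      ∀ Gk : ZMod p → Matrix (Fin n) (Fin n) ℂ,
        (∀ i, IsGroupInvM (fblock (cplx A) i) (Gk i)) →
        bcirc (cplx G) =
          ((Fmat p)ᴴ ⊗ₖ (1 : Matrix (Fin n) (Fin n) ℂ)) * blockDiag Gk *
            ((Fmat p) ⊗ₖ (1 : Matrix (Fin n) (Fin n) ℂ))) := by
  constructor
  · constructor
    · rintro ⟨G, h1, h2, h3⟩ i
      exact ⟨_, fblock_ginv h1 h2 h3 i⟩
    · intro h
      choose Gc hGc using h
      have hconj : ∀ i, Gc (-i) = conjM (Gc i) := fun i =>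
        ginv_unique (hGc (-i)) (by
          rw [← conjM_fblock]
          exact conjM_ginv (hGc i))
      set H : Tensor ℂ n n p := fun k => (p : ℂ)⁻¹ • ∑ i : ZMod p, ee p i (-k) • Gc i with hH
      have hfH : ∀ j, fblock H j = Gc j := fun j => fblock_invT Gc j
      have hHreal : ∀ k, conjM (H k) = H k := by
        intro k
        ext r c
        simp only [conjM, Matrix.map_apply, hH, Matrix.smul_apply, Matrix.sum_apply,
          smul_eq_mul, _root_.map_mul, map_sum, map_inv₀, Complex.conj_natCast]
        congr 1
        rw [← Equiv.sum_comp (Equiv.neg (ZMod p))]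
        refine Finset.sum_congr rfl fun i _ => ?_
        simp only [Equiv.neg_apply]
        rw [conj_ee, neg_neg]
        have h2 : (starRingEnd ℂ) (Gc (-i) r c) = conjM (Gc (-i)) r c := rfl
        rw [h2, hconj i, conjM_conjM]
        congr 1
        rw [ee_comm, ← ee_neg_comm, ee_comm]
      set G : Tensor ℝ n n p := fun k => Matrix.of fun r c => (H k r c).re with hG
      have hcplxG : cplx G = H := by
        funext k
        ext r c
        have him : (H k r c).im = 0 := by
          have := congrFun (congrFun (hHreal k) r) c
          simp only [conjM, Matrix.map_apply] at this
          exact Complex.conj_eq_iff_im.mp this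
        simp [hG, cplx, Matrix.map_apply, Complex.ext_iff, him]
      refine ⟨G, ?_, ?_, ?_⟩
      · refine cplx_inj ?_
        rw [cplx_tpr, cplx_tpr, hcplxG]
        refine fblock_injective fun i => ?_
        rw [fblock_tpr, fblock_tpr, hfH i, ← mul_assoc]
        exact (hGc i).1
      · refine cplx_inj ?_
        rw [cplx_tpr, cplx_tpr, hcplxG]
        refine fblock_injective fun i => ?_
        rw [fblock_tpr, fblock_tpr, hfH i, ← mul_assoc]
        exact (hGc i).2.1
      · refine cplx_inj ?_
        rw [cplx_tpr, cplx_tpr, hcplxG]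
        refine fblock_injective fun i => ?_
        rw [fblock_tpr, fblock_tpr, hfH i]
        exact (hGc i).2.2
  · rintro G ⟨h1, h2, h3⟩ Gk hGk
    have hfb : (fun i => fblock (cplx G) i) = Gk :=
      funext fun i => ginv_unique (fblock_ginv h1 h2 h3 i) (hGk i)
    rw [bcirc_diag (cplx G), hfb]
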